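/- Suppose ‖∇ℓ(w, z_i)‖ ≤ C for all i and w, and let L(w; S) = (1/|S|) Σ_{z∈S} ℓ(w,z) + (λ/2)‖w‖². Let D be a dataset of size n, M ⊆ D of size m with m < n, and w a point with ‖w‖ ≤ C/λ. Then ‖∇L(w; D\M) - ∇L(w; D)‖ ≤ 2Cm/(n−m), where the gradient is with respect to w. -/

import Mathlib

theorem stmt4 {d : ℕ} {Z : Type*} [DecidableEq Z]
    (C lam : ℝ) (hC : 0 < C) (hlam : 0 < lam)
    (g : EuclideanSpace ℝ (Fin d) → Z → EuclideanSpace ℝ (Fin d))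
    (hgbound : ∀ w z, ‖g w z‖ ≤ C)
    (G : Finset Z → EuclideanSpace ℝ (Fin d) → EuclideanSpace ℝ (Fin d))
    (hG : ∀ S w, G S w = (S.card : ℝ)⁻¹ • ∑ z ∈ S, g w z + lam • w)
    (D M : Finset Z) (hM : M ⊆ D) (hmn : M.card < D.card)
    (w : EuclideanSpace ℝ (Fin d)) (hw : ‖w‖ ≤ C / lam) :
    ‖G (D \ M) w - G D w‖ ≤ 2 * C * M.card / ((D.card : ℝ) - M.card) := by
  set n : ℕ := D.card with hn
  set m : ℕ := M.card with hm
  have hcard : (D \ M).card = n - m := Finset.card_sdiff_of_subset hM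
  have hmn' : (m : ℝ) < n := by exact_mod_cast hmn
  have hnm : ((n - m : ℕ) : ℝ) = (n : ℝ) - m := by
    rw [Nat.cast_sub hmn.le]
  have hnmpos : (0 : ℝ) < (n : ℝ) - m := by linarith
  have hnpos : (0 : ℝ) < (n : ℝ) := by linarith [Nat.cast_nonneg (α := ℝ) m]
  set A : EuclideanSpace ℝ (Fin d) := ∑ z ∈ D \ M, g w z with hA
  set B : EuclideanSpace ℝ (Fin d) := ∑ z ∈ M, g w z with hB
  have hsplit : ∑ z ∈ D, g w z = A + B := (Finset.sum_sdiff hM).symm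
  have hAle : ‖A‖ ≤ ((n : ℝ) - m) * C := by
    calc ‖A‖ ≤ ∑ z ∈ D \ M, ‖g w z‖ := norm_sum_le _ _
    _ ≤ ∑ _z ∈ D \ M, C := Finset.sum_le_sum fun z _ => hgbound w z
    _ = ((n : ℝ) - m) * C := by
        rw [Finset.sum_const, hcard, nsmul_eq_mul, hnm]
  have hBle : ‖B‖ ≤ (m : ℝ) * C := by
    calc ‖B‖ ≤ ∑ z ∈ M, ‖g w z‖ := norm_sum_le _ _
    _ ≤ ∑ _z ∈ M, C := Finset.sum_le_sum fun z _ => hgbound w z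
    _ = (m : ℝ) * C := by rw [Finset.sum_const, nsmul_eq_mul]
  have hdiff : G (D \ M) w - G D w
      = (((n : ℝ) - m)⁻¹ - (n : ℝ)⁻¹) • A - (n : ℝ)⁻¹ • B := by
    rw [hG, hG, hcard, hsplit, hnm, ← hn, smul_add, sub_smul]
    abel
  rw [hdiff]
  have h1 : ((n : ℝ) - m)⁻¹ - (n : ℝ)⁻¹ = m / ((n : ℝ) * ((n : ℝ) - m)) := by
    field_simp
    ring
  calc ‖(((n : ℝ) - m)⁻¹ - (n : ℝ)⁻¹) • A - (n : ℝ)⁻¹ • B‖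
      ≤ ‖(((n : ℝ) - m)⁻¹ - (n : ℝ)⁻¹) • A‖ + ‖(n : ℝ)⁻¹ • B‖ := norm_sub_le _ _
    _ = |((n : ℝ) - m)⁻¹ - (n : ℝ)⁻¹| * ‖A‖ + |(n : ℝ)⁻¹| * ‖B‖ := by
        rw [norm_smul, norm_smul, Real.norm_eq_abs, Real.norm_eq_abs]
    _ ≤ ((m : ℝ) / ((n : ℝ) * ((n : ℝ) - m))) * (((n : ℝ) - m) * C)
        + (n : ℝ)⁻¹ * ((m : ℝ) * C) := by
        have habs1 : |((n : ℝ) - m)⁻¹ - (n : ℝ)⁻¹| = (m : ℝ) / ((n : ℝ) * ((n : ℝ) - m)) := by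
          rw [h1, abs_of_nonneg]; positivity
        have habs2 : |(n : ℝ)⁻¹| = (n : ℝ)⁻¹ := abs_of_nonneg (by positivity)
        rw [habs1, habs2]
        have hfrac : (0:ℝ) ≤ (m : ℝ) / ((n : ℝ) * ((n : ℝ) - m)) := by positivity
        exact add_le_add (mul_le_mul_of_nonneg_left hAle hfrac)
          (mul_le_mul_of_nonneg_left hBle (by positivity))
    _ = 2 * C * m / (n : ℝ) := by
        have h2 : (n : ℝ) ≠ 0 := hnpos.ne'
        have h3 : (n : ℝ) - m ≠ 0 := hnmpos.ne'
        field_simp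
        ring
    _ ≤ 2 * C * M.card / ((D.card : ℝ) - M.card) := by
        rw [← hn, ← hm]
        apply div_le_div_of_nonneg_left (by positivity) hnmpos (by linarith)
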